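/- If the curvature operator of the second kind of an algebraic curvature tensor is nonnegative (positive semidefinite) or nonpositive, and its kernel contains all mixed tensors eⁱ⊗eʲ + eʲ⊗eⁱ of a nontrivial orthogonal splitting V = V₁ ⊕ V₂ coming from a product curvature tensor, and additionally the Weitzenböck curvature term of the volume form of V₁ vanishes, then the curvature tensor is zero. -/

import Mathlib

/-- An algebraic curvature tensor on `ℝⁿ`. -/
structure CurvTensor (n : ℕ) where
  R : Fin n → Fin n → Fin n → Fin n → ℝ
  antisymm_fst : ∀ i j k l, R j i k l = - R i j k l
  antisymm_snd : ∀ i j k l, R i j l k = - R i j k l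
  pair_symm : ∀ i j k l, R k l i j = R i j k l
  bianchi : ∀ i j k l, R i j k l + R j k i l + R k i j l = 0

/-- The Ricci curvature of an algebraic curvature tensor. -/
noncomputable def ricci {n : ℕ} (T : CurvTensor n) (a b : Fin n) : ℝ := ∑ i, T.R a i b i

/-- The scalar curvature of an algebraic curvature tensor. -/
noncomputable def scalCurv {n : ℕ} (T : CurvTensor n) : ℝ := ∑ a, ricci T a a

/-- The curvature operator of the second kind,
`𝓡(h) = R̄(h) + ⟨Ric, h⟩ g / n` on trace-free symmetric tensors. -/
noncomputable def calR {n : ℕ} (T : CurvTensor n) (h : Matrix (Fin n) (Fin n) ℝ) :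
    Matrix (Fin n) (Fin n) ℝ :=
  Matrix.of fun i j =>
    (∑ k, ∑ l, T.R i k l j * h k l) +
      (∑ k, ∑ l, ricci T k l * h k l) / n * (if i = j then 1 else 0)

/-- The Euclidean inner product of `(0,2)`-tensors. -/
noncomputable def inp {n : ℕ} (A B : Matrix (Fin n) (Fin n) ℝ) : ℝ := ∑ i, ∑ j, A i j * B i j

/-- The symmetrized tensor `eⁱ⊗eʲ + eʲ⊗eⁱ`. -/
noncomputable def Esym {n : ℕ} (i j : Fin n) : Matrix (Fin n) (Fin n) ℝ :=
  Matrix.single i j 1 + Matrix.single j i 1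

namespace CurvAux
variable {n : ℕ}

lemma R_fst0 (T : CurvTensor n) (i k l : Fin n) : T.R i i k l = 0 := by
  have h := T.antisymm_fst i i k l; linarith

lemma R_snd0 (T : CurvTensor n) (i j k : Fin n) : T.R i j k k = 0 := by
  have h := T.antisymm_snd i j k k; linarith

lemma R_swap (T : CurvTensor n) (i j k l : Fin n) : T.R j i l k = T.R i j k l := by
  rw [T.antisymm_fst i j l k, T.antisymm_snd i j k l, neg_neg]

lemma sum_mul_Esym (f : Fin n → Fin n → ℝ) (a b : Fin n) :
    (∑ k, ∑ l, f k l * Esym a b k l) = f a b + f b a := by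
  simp [Esym, Matrix.single, Matrix.add_apply, mul_add, mul_ite, mul_one, mul_zero,
    Finset.sum_add_distrib, ite_and, Finset.sum_ite_eq, Finset.sum_ite_eq']

lemma trace_Esym (c d : Fin n) (hcd : c ≠ d) : Matrix.trace (Esym c d) = 0 := by
  unfold Esym
  rw [Matrix.trace]
  apply Finset.sum_eq_zero
  intro i _
  have h1 : ¬(c = i ∧ d = i) := fun ⟨h1, h2⟩ => hcd (h1.trans h2.symm)
  have h2 : ¬(d = i ∧ c = i) := fun ⟨h1, h2⟩ => hcd (h2.trans h1.symm)
  simp [Matrix.diag, Matrix.single, h1, h2]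

lemma isSymm_Esym (a b : Fin n) : (Esym a b).IsSymm := by
  unfold Esym
  rw [Matrix.IsSymm, Matrix.transpose_add]
  have h : ∀ x y : Fin n, (Matrix.single x y (1:ℝ)).transpose = Matrix.single y x 1 := by
    intro x y
    ext i j
    simp [Matrix.single, and_comm]
  rw [h, h]
  exact add_comm _ _

lemma inp_smul (c : ℝ) (A B : Matrix (Fin n) (Fin n) ℝ) : inp (c • A) B = c * inp A B := by
  simp [inp, Finset.mul_sum, mul_assoc]

lemma inp_calR (T : CurvTensor n) (h h' : Matrix (Fin n) (Fin n) ℝ) :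
    inp (calR T h) h' =
      (∑ i, ∑ j, (∑ k, ∑ l, T.R i k l j * h k l) * h' i j) +
        (∑ k, ∑ l, ricci T k l * h k l) / n * Matrix.trace h' := by
  simp only [inp, calR, Matrix.of_apply, add_mul, Finset.sum_add_distrib]
  congr 1
  simp [Matrix.trace, Matrix.diag, mul_ite, ite_mul, one_mul, zero_mul, mul_zero,
    Finset.sum_ite_eq, Finset.mul_sum]

lemma sum_mul_comb (f : Fin n → Fin n → ℝ) (a b c d : Fin n) (s : ℝ) :
    (∑ k, ∑ l, f k l * (Esym a b + s • Esym c d) k l)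
      = (f a b + f b a) + s * (f c d + f d c) := by
  have h : ∀ k l, f k l * (Esym a b + s • Esym c d) k l
      = f k l * Esym a b k l + s * (f k l * Esym c d k l) := by
    intro k l
    simp only [Matrix.add_apply, Matrix.smul_apply, smul_eq_mul]
    ring
  simp only [h, Finset.sum_add_distrib, ← Finset.mul_sum, sum_mul_Esym]

lemma quad (T : CurvTensor n) (ε : ℝ)
    (Hsig : ∀ h : Matrix (Fin n) (Fin n) ℝ, h.IsSymm → Matrix.trace h = 0 →
      0 ≤ ε * inp (calR T h) h)
    (a b c d : Fin n) (hab : a ≠ b) (hcd : c ≠ d) (s : ℝ) :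
    0 ≤ ε * (2 * T.R a b a b
        + 2 * s * (T.R c a b d + T.R c b a d + T.R d a b c + T.R d b a c)
        + 2 * s ^ 2 * T.R c d c d) := by
  have hsymm : (Esym a b + s • Esym c d).IsSymm :=
    (isSymm_Esym a b).add ((isSymm_Esym c d).smul s)
  have htr : Matrix.trace (Esym a b + s • Esym c d) = 0 := by
    simp [Matrix.trace_add, Matrix.trace_smul, trace_Esym a b hab, trace_Esym c d hcd]
  have key := Hsig _ hsymm htr
  have hval : inp (calR T (Esym a b + s • Esym c d)) (Esym a b + s • Esym c d)
      = 2 * T.R a b a b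
        + 2 * s * (T.R c a b d + T.R c b a d + T.R d a b c + T.R d b a c)
        + 2 * s ^ 2 * T.R c d c d := by
    rw [inp_calR, htr, mul_zero, add_zero]
    have h1 : ∀ i j : Fin n, (∑ k, ∑ l, T.R i k l j * (Esym a b + s • Esym c d) k l)
        = (T.R i a b j + T.R i b a j) + s * (T.R i c d j + T.R i d c j) :=
      fun i j => sum_mul_comb (fun k l => T.R i k l j) a b c d s
    simp only [h1]
    rw [sum_mul_comb
      (fun i j => (T.R i a b j + T.R i b a j) + s * (T.R i c d j + T.R i d c j)) a b c d s]
    linear_combination R_fst0 T a b b + R_fst0 T b a a + R_swap T a b a b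
      + s * T.pair_symm d b a c + s * T.pair_symm c b a d + s * T.pair_symm d a b c
      + s * T.pair_symm c a b d
      + s ^ 2 * (R_fst0 T c d d + R_fst0 T d c c + R_swap T c d c d)
  rw [hval] at key
  exact key

end CurvAux

/-- If the curvature operator of the second kind of an algebraic curvature tensor with
product structure `V = V₁ ⊕ V₂` is nonnegative or nonpositive, its kernel contains all
mixed tensors `eⁱ⊗eʲ + eʲ⊗eⁱ` of the splitting, and the Weitzenböck curvature term of the
volume form `ω = e¹∧…∧eᵖ` of `V₁` vanishes (expressed, via an orthonormal eigenbasis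
`{S_α}` of `𝓡` with eigenvalues `λ_α`, as
`∑_α λ_α |S_α ω|² + (p(n−2p)/n) ∑_{j≤p} Ric_{jj} + (p²/n²) scal = 0`, where
`|S_α ω|² = (∑_{m≤p} (S_α)_{mm})² + ∑_{m≤p, k>p} (S_α)_{mk}²`), then the curvature tensor
is zero. -/
theorem flat_of_product_signed_calR (n p : ℕ) (hp1 : 1 ≤ p) (hpn : 2 * p ≤ n)
    (T : CurvTensor n)
    (hprod : ∀ i j k l : Fin n, (j : ℕ) < p → p ≤ (k : ℕ) → T.R i j k l = 0)
    (hsign :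
      (∀ h : Matrix (Fin n) (Fin n) ℝ, h.IsSymm → Matrix.trace h = 0 → 0 ≤ inp (calR T h) h) ∨
      (∀ h : Matrix (Fin n) (Fin n) ℝ, h.IsSymm → Matrix.trace h = 0 → inp (calR T h) h ≤ 0))
    (hker : ∀ i j : Fin n, (i : ℕ) < p → p ≤ (j : ℕ) → calR T (Esym i j) = 0)
    (D : ℕ) (S : Fin D → Matrix (Fin n) (Fin n) ℝ) (lam : Fin D → ℝ)
    (hS_symm : ∀ α, (S α).IsSymm) (hS_tr : ∀ α, Matrix.trace (S α) = 0)
    (hS_orth : ∀ α β, inp (S α) (S β) = if α = β then 1 else 0)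
    (hS_eig : ∀ α, calR T (S α) = lam α • S α)
    (hS_span : ∀ h : Matrix (Fin n) (Fin n) ℝ, h.IsSymm → Matrix.trace h = 0 →
      h ∈ Submodule.span ℝ (Set.range S))
    (hWeitzenboeck :
      (∑ α, lam α *
        ((∑ m : Fin n, if (m : ℕ) < p then S α m m else 0) ^ 2 +
          ∑ m : Fin n, ∑ k : Fin n,
            if (m : ℕ) < p ∧ p ≤ (k : ℕ) then (S α m k) ^ 2 else 0)) +
      (p * ((n : ℝ) - 2 * p) / n) * (∑ j : Fin n, if (j : ℕ) < p then ricci T j j else 0) +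
      ((p : ℝ) ^ 2 / (n : ℝ) ^ 2) * scalCurv T = 0) :
    ∀ i j k l, T.R i j k l = 0 := by
  classical
  obtain ⟨ε, hε, Hsig⟩ : ∃ ε : ℝ, ε ≠ 0 ∧ ∀ h : Matrix (Fin n) (Fin n) ℝ,
      h.IsSymm → Matrix.trace h = 0 → 0 ≤ ε * inp (calR T h) h := by
    rcases hsign with H | H
    · exact ⟨1, one_ne_zero, fun h hs ht => by simpa using H h hs ht⟩
    · refine ⟨-1, by norm_num, fun h hs ht => ?_⟩
      have := H h hs ht; linarith
  -- sign of diagonal sectional curvatures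
  have hsec : ∀ a b : Fin n, 0 ≤ ε * T.R a b a b := by
    intro a b
    by_cases hab : a = b
    · subst hab; rw [CurvAux.R_fst0]; simp
    · have h0 := CurvAux.quad T ε Hsig a b a b hab hab 0
      nlinarith [h0]
  -- sign of eigenvalues
  have hlam : ∀ α, 0 ≤ ε * lam α := by
    intro α
    have h0 := Hsig (S α) (hS_symm α) (hS_tr α)
    rw [hS_eig α, CurvAux.inp_smul, hS_orth α α] at h0
    simpa using h0
  -- Ricci and scalar curvature signs
  have hric : ∀ a : Fin n, 0 ≤ ε * ricci T a a := by
    intro a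
    rw [ricci, Finset.mul_sum]
    exact Finset.sum_nonneg fun i _ => hsec a i
  have hscal : 0 ≤ ε * scalCurv T := by
    rw [scalCurv, Finset.mul_sum]
    exact Finset.sum_nonneg fun a _ => hric a
  have hnn : 0 < n := by omega
  have hnR : (0:ℝ) < n := by exact_mod_cast hnn
  have hpR : (0:ℝ) < p := by exact_mod_cast (by omega : 0 < p)
  have hpnR : 2 * (p:ℝ) ≤ n := by exact_mod_cast hpn
  -- the three Weitzenboeck summands
  set Aterm : ℝ := ∑ α, lam α *
        ((∑ m : Fin n, if (m : ℕ) < p then S α m m else 0) ^ 2 +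
          ∑ m : Fin n, ∑ k : Fin n,
            if (m : ℕ) < p ∧ p ≤ (k : ℕ) then (S α m k) ^ 2 else 0) with hAdef
  set r1 : ℝ := ∑ j : Fin n, if (j : ℕ) < p then ricci T j j else 0 with hr1def
  have hQ : ∀ α, 0 ≤ (∑ m : Fin n, if (m : ℕ) < p then S α m m else 0) ^ 2 +
          ∑ m : Fin n, ∑ k : Fin n,
            if (m : ℕ) < p ∧ p ≤ (k : ℕ) then (S α m k) ^ 2 else 0 := by
    intro α
    apply add_nonneg (sq_nonneg _)
    apply Finset.sum_nonneg
    intro m _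
    apply Finset.sum_nonneg
    intro k _
    split
    · exact sq_nonneg _
    · exact le_refl 0
  have hA : 0 ≤ ε * Aterm := by
    rw [hAdef, Finset.mul_sum]
    apply Finset.sum_nonneg
    intro α _
    have h1 := hlam α
    have h2 := hQ α
    calc (0:ℝ) ≤ (ε * lam α) * ((∑ m : Fin n, if (m : ℕ) < p then S α m m else 0) ^ 2 +
          ∑ m : Fin n, ∑ k : Fin n,
            if (m : ℕ) < p ∧ p ≤ (k : ℕ) then (S α m k) ^ 2 else 0) := mul_nonneg h1 h2
      _ = ε * (lam α * _) := by ring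
  have hr1 : 0 ≤ ε * r1 := by
    rw [hr1def, Finset.mul_sum]
    apply Finset.sum_nonneg
    intro j _
    rw [mul_ite, mul_zero]
    split
    · exact hric j
    · exact le_refl 0
  have hB2 : 0 ≤ ε * ((p * ((n : ℝ) - 2 * p) / n) * r1) := by
    have hc : 0 ≤ (p:ℝ) * ((n : ℝ) - 2 * p) / n :=
      div_nonneg (mul_nonneg hpR.le (by linarith)) hnR.le
    calc (0:ℝ) ≤ (p * ((n : ℝ) - 2 * p) / n) * (ε * r1) := mul_nonneg hc hr1
      _ = ε * ((p * ((n : ℝ) - 2 * p) / n) * r1) := by ring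
  have hC2 : 0 ≤ ε * (((p : ℝ) ^ 2 / (n : ℝ) ^ 2) * scalCurv T) := by
    have hc : 0 ≤ (p:ℝ) ^ 2 / (n:ℝ) ^ 2 := by positivity
    calc (0:ℝ) ≤ ((p : ℝ) ^ 2 / (n : ℝ) ^ 2) * (ε * scalCurv T) := mul_nonneg hc hscal
      _ = ε * (((p : ℝ) ^ 2 / (n : ℝ) ^ 2) * scalCurv T) := by ring
  -- all three summands vanish
  have hsum : ε * Aterm + ε * ((p * ((n : ℝ) - 2 * p) / n) * r1)
      + ε * (((p : ℝ) ^ 2 / (n : ℝ) ^ 2) * scalCurv T) = 0 := by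
    have h0 : ε * Aterm + ε * ((p * ((n : ℝ) - 2 * p) / n) * r1)
        + ε * (((p : ℝ) ^ 2 / (n : ℝ) ^ 2) * scalCurv T)
        = ε * (Aterm + (p * ((n : ℝ) - 2 * p) / n) * r1
            + ((p : ℝ) ^ 2 / (n : ℝ) ^ 2) * scalCurv T) := by ring
    rw [h0, hWeitzenboeck, mul_zero]
  have hCzero : ε * (((p : ℝ) ^ 2 / (n : ℝ) ^ 2) * scalCurv T) = 0 := by linarith
  have hscal0 : ε * scalCurv T = 0 := by
    have h0 : ((p : ℝ) ^ 2 / (n : ℝ) ^ 2) * (ε * scalCurv T) = 0 := by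
      rw [← hCzero]; ring
    have hcne : ((p : ℝ) ^ 2 / (n : ℝ) ^ 2) ≠ 0 := by positivity
    exact (mul_eq_zero.mp h0).resolve_left hcne
  -- all diagonal sectional curvatures vanish
  have hric0 : ∀ a : Fin n, ε * ricci T a a = 0 := by
    have h0 : (∑ a : Fin n, ε * ricci T a a) = 0 := by
      rw [← Finset.mul_sum]; exact hscal0
    intro a
    exact (Finset.sum_eq_zero_iff_of_nonneg (fun i _ => hric i)).mp h0 a (Finset.mem_univ a)
  have hsec0 : ∀ a b : Fin n, T.R a b a b = 0 := by
    intro a b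
    have h0 : (∑ i : Fin n, ε * T.R a i a i) = 0 := by
      rw [← Finset.mul_sum]; exact hric0 a
    have h1 := (Finset.sum_eq_zero_iff_of_nonneg (fun i _ => hsec a i)).mp h0 b
      (Finset.mem_univ b)
    exact (mul_eq_zero.mp h1).resolve_left hε
  -- vanishing of the polarized quantity
  have hBq : ∀ a b c d : Fin n, a ≠ b → c ≠ d →
      T.R c a b d + T.R c b a d + T.R d a b c + T.R d b a c = 0 := by
    intro a b c d hab hcd
    have q1 := CurvAux.quad T ε Hsig a b c d hab hcd 1
    have q2 := CurvAux.quad T ε Hsig a b c d hab hcd (-1)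
    rw [hsec0 a b, hsec0 c d] at q1 q2
    have h0 : ε * (T.R c a b d + T.R c b a d + T.R d a b c + T.R d b a c) = 0 := by
      nlinarith [q1, q2]
    exact (mul_eq_zero.mp h0).resolve_left hε
  -- the swap identity on middle arguments
  have star : ∀ a b c d : Fin n, b ≠ c → a ≠ d → T.R a b c d = - T.R a c b d := by
    intro a b c d hbc had
    have h0 := hBq c b a d (Ne.symm hbc) had
    have e1 : T.R d c b a = T.R a b c d := by
      rw [T.pair_symm b a d c, CurvAux.R_swap T a b c d]
    have e2 : T.R d b c a = T.R a c b d := by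
      rw [T.pair_symm c a d b, CurvAux.R_swap T a c b d]
    linarith
  -- three-index vanishing, pattern 2 = 4
  have L1 : ∀ i j k : Fin n, T.R i j k j = 0 := by
    intro i j k
    by_cases hij : i = j
    · subst hij; exact CurvAux.R_fst0 T i k i
    by_cases hjk : j = k
    · subst hjk; exact CurvAux.R_snd0 T i j j
    · rw [star i j k j hjk hij, CurvAux.R_snd0 T i k j, neg_zero]
  -- three-index vanishing, pattern 1 = 3
  have L2 : ∀ i j l : Fin n, T.R i j i l = 0 := by
    intro i j l
    rw [CurvAux.R_swap T j i l i]
    exact L1 j i l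
  -- final case analysis
  intro i j k l
  by_cases hij : i = j
  · subst hij; exact CurvAux.R_fst0 T i k l
  by_cases hkl : k = l
  · subst hkl; exact CurvAux.R_snd0 T i j k
  by_cases hik : i = k
  · subst hik; exact L2 i j l
  by_cases hjl : j = l
  · subst hjl; exact L1 i j k
  by_cases hil : i = l
  · subst hil
    rw [CurvAux.R_swap T j i i k, T.antisymm_fst i j i k, L2 i j k, neg_zero]
  by_cases hjk : j = k
  · subst hjk
    rw [T.antisymm_fst j i j l, L2 j i l, neg_zero]
  · -- all four indices distinct
    have h1 : T.R j k i l = T.R i j k l := by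
      have e1 := T.pair_symm i l j k
      have e2 := star i l j k (Ne.symm hjl) hik
      have e3 := T.antisymm_snd i j k l
      linarith
    have h2 : T.R k i j l = T.R i j k l := by
      have e1 := T.antisymm_fst i k j l
      have e2 := star i k j l (fun h => hjk h.symm) hil
      linarith
    have hb := T.bianchi i j k l
    linarith
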